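/- Let A be a domain and φ : A[t_1,...,t_d] → A[x_1,...,x_k] the A-algebra map sending the t_i bijectively onto the distinct monomials of degree n (with d = C(n+k−1, k−1)). Then the kernel I of φ is a prime ideal and height I = d − k. -/

import Mathlib

open MvPolynomial



open MvPolynomial

lemma digitsInj : ∀ (m N : ℕ) (a b : Fin m → ℕ), (∀ i, a i < N) → (∀ i, b i < N) →
    (∑ i, a i * N ^ (i : ℕ)) = (∑ i, b i * N ^ (i : ℕ)) → a = b := by
  intro m
  induction m with
  | zero => intro N a b _ _ _; ext i; exact absurd i.2 (by omega)
  | succ m ih =>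
    intro N a b ha hb hsum
    rw [Fin.sum_univ_succ, Fin.sum_univ_succ] at hsum
    simp only [Fin.val_zero, pow_zero, mul_one, Fin.val_succ] at hsum
    have hre : ∀ (c : Fin (m+1) → ℕ),
        (∑ i : Fin m, c i.succ * N ^ ((i : ℕ) + 1)) = N * ∑ i : Fin m, c i.succ * N ^ (i : ℕ) := by
      intro c
      rw [Finset.mul_sum]
      congr 1; ext i; ring
    rw [hre a, hre b] at hsum
    have h0 : a 0 = b 0 := by
      have := congrArg (· % N) hsum
      simpa [Nat.add_mul_mod_self_left, Nat.mul_comm,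
        Nat.mod_eq_of_lt (ha 0), Nat.mod_eq_of_lt (hb 0)] using this
    have hN : 0 < N := lt_of_le_of_lt (Nat.zero_le _) (ha 0)
    have htail : (∑ i : Fin m, a i.succ * N ^ (i : ℕ)) = ∑ i : Fin m, b i.succ * N ^ (i : ℕ) := by
      have : N * (∑ i : Fin m, a i.succ * N ^ (i : ℕ)) =
          N * ∑ i : Fin m, b i.succ * N ^ (i : ℕ) := by omega
      exact Nat.eq_of_mul_eq_mul_left hN this
    have := ih N (fun i => a i.succ) (fun i => b i.succ) (fun i => ha _) (fun i => hb _) htail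
    ext i
    refine Fin.cases ?_ ?_ i
    · exact h0
    · intro j; exact congrFun this j

section Shear

variable (K : Type*) [CommRing K] (d N : ℕ)

noncomputable def shearEquiv :
    MvPolynomial (Fin (d + 1)) K ≃ₐ[K] MvPolynomial (Fin (d + 1)) K :=
  AlgEquiv.ofAlgHom
    (aeval fun i => if i = 0 then X 0 else X i + X 0 ^ (N ^ (i : ℕ)))
    (aeval fun i => if i = 0 then X 0 else X i - X 0 ^ (N ^ (i : ℕ)))
    (by
      apply MvPolynomial.algHom_ext
      intro i
      by_cases h : i = 0 <;> simp [h])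
    (by
      apply MvPolynomial.algHom_ext
      intro i
      by_cases h : i = 0 <;> simp [h])

lemma shearEquiv_X (i : Fin (d + 1)) :
    shearEquiv K d N (X i) = if i = 0 then X 0 else X i + X 0 ^ (N ^ (i : ℕ)) := by
  simp [shearEquiv]

end Shear

section MonicTrick

variable {K : Type*} [Field K] {d : ℕ}

lemma exists_shear_monic (f : MvPolynomial (Fin (d + 1)) K) (hf : f ≠ 0) :
    ∃ (σ : MvPolynomial (Fin (d + 1)) K ≃ₐ[K] MvPolynomial (Fin (d + 1)) K) (c : K), c ≠ 0 ∧
      (MvPolynomial.finSuccEquiv K d (σ (C c * f))).Monic := by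
  classical
  set N : ℕ := f.totalDegree + 2 with hN
  set σ := shearEquiv K d N with hσ
  set Q : Fin (d + 1) → Polynomial (MvPolynomial (Fin d) K) :=
    fun i => MvPolynomial.finSuccEquiv K d (σ (X i)) with hQ
  have hQm : ∀ i, (Q i).Monic := by
    intro i
    by_cases h : i = 0
    · simp [hQ, hσ, shearEquiv_X, h, finSuccEquiv_X_zero, Polynomial.monic_X]
    · obtain ⟨j, rfl⟩ := Fin.eq_succ_of_ne_zero h
      have heq : σ (X j.succ) = X j.succ + X 0 ^ (N ^ ((j.succ : Fin (d+1)) : ℕ)) := by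
        rw [hσ, shearEquiv_X]; simp [h]
      show ((MvPolynomial.finSuccEquiv K d) (σ (X j.succ))).Monic
      rw [heq, map_add, map_pow, finSuccEquiv_X_zero, finSuccEquiv_X_succ, add_comm]
      refine Polynomial.monic_X_pow_add ?_
      refine lt_of_le_of_lt Polynomial.degree_C_le ?_
      have hp : 0 < N ^ ((j.succ : Fin (d+1)) : ℕ) := Nat.pow_pos (by omega)
      exact_mod_cast hp
  have hQd : ∀ i, (Q i).natDegree = N ^ (i : ℕ) := by
    intro i
    by_cases h : i = 0
    · subst h
      simp [hQ, hσ, shearEquiv_X, finSuccEquiv_X_zero]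
    · obtain ⟨j, rfl⟩ := Fin.eq_succ_of_ne_zero h
      have heq : σ (X j.succ) = X j.succ + X 0 ^ (N ^ ((j.succ : Fin (d+1)) : ℕ)) := by
        rw [hσ, shearEquiv_X]; simp [h]
      show ((MvPolynomial.finSuccEquiv K d) (σ (X j.succ))).natDegree = N ^ ((j.succ : Fin (d+1)) : ℕ)
      rw [heq, map_add, map_pow, finSuccEquiv_X_zero, finSuccEquiv_X_succ, add_comm]
      exact Polynomial.natDegree_X_pow_add_C
  set w : (Fin (d + 1) →₀ ℕ) → ℕ := fun a => ∑ i, a i * N ^ (i : ℕ) with hw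
  set g : (Fin (d + 1) →₀ ℕ) → Polynomial (MvPolynomial (Fin d) K) :=
    fun a => ∏ i, Q i ^ (a i) with hg
  have hgm : ∀ a, (g a).Monic := fun a =>
    Polynomial.monic_prod_of_monic _ _ fun i _ => (hQm i).pow _
  have hgd : ∀ a, (g a).natDegree = w a := by
    intro a
    rw [hg]
    rw [Polynomial.natDegree_prod_of_monic _ _ fun i _ => (hQm i).pow _]
    simp only [Polynomial.natDegree_pow, hQd, hw]
  have hCimg : ∀ r : K, MvPolynomial.finSuccEquiv K d (σ (C r)) = Polynomial.C (C r) := by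
    intro r
    have h1 : σ (C r) = C r := by
      have := σ.commutes r
      simpa [MvPolynomial.algebraMap_eq] using this
    rw [h1]
    simp [MvPolynomial.finSuccEquiv_apply, MvPolynomial.eval₂Hom_C]
  have himg : ∀ (a : Fin (d + 1) →₀ ℕ) (r : K),
      MvPolynomial.finSuccEquiv K d (σ (monomial a r)) = Polynomial.C (C r) * g a := by
    intro a r
    rw [monomial_eq, Finsupp.prod_fintype _ _ (fun i => pow_zero _)]
    rw [map_mul, map_mul, hCimg, map_prod, map_prod]
    congr 1
    refine Finset.prod_congr rfl fun i _ => ?_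
    rw [map_pow, map_pow]
  have hdig : ∀ a ∈ f.support, ∀ i, a i < N := by
    intro a ha i
    have h1 : a i ≤ ∑ j, a j := Finset.single_le_sum (fun j _ => Nat.zero_le _) (Finset.mem_univ i)
    have h2 : (a.sum fun _ e => e) ≤ f.totalDegree := le_totalDegree ha
    rw [Finsupp.sum_fintype _ _ (fun _ => rfl)] at h2
    omega
  have hwinj : ∀ a ∈ f.support, ∀ b ∈ f.support, w a = w b → a = b := by
    intro a ha b hb hab
    have := digitsInj (d + 1) N (fun i => a i) (fun i => b i) (hdig a ha) (hdig b hb) hab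
    exact DFunLike.coe_injective this
  obtain ⟨A, hA, hmax⟩ := f.support.exists_max_image w (support_nonempty.mpr hf)
  have hcA : coeff A f ≠ 0 := mem_support_iff.mp hA
  refine ⟨σ, (coeff A f)⁻¹, inv_ne_zero hcA, ?_⟩
  have hsum : MvPolynomial.finSuccEquiv K d (σ f) =
      ∑ a ∈ f.support, Polynomial.C (C (coeff a f)) * g a := by
    conv_lhs => rw [← f.support_sum_monomial_coeff]
    rw [map_sum, map_sum]
    exact Finset.sum_congr rfl fun a _ => himg a _
  have hgdeg : ∀ a, (g a).degree = (w a : WithBot ℕ) := by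
    intro a
    rw [Polynomial.degree_eq_natDegree (hgm a).ne_zero, hgd]
  have hmaindeg : (Polynomial.C (C (coeff A f)) * g A).degree = (w A : WithBot ℕ) := by
    rw [Polynomial.degree_mul, Polynomial.degree_C (by simpa using hcA), hgdeg, zero_add]
  have hrest : (∑ a ∈ f.support.erase A, Polynomial.C (C (coeff a f)) * g a).degree
      < (w A : WithBot ℕ) := by
    refine lt_of_le_of_lt (Polynomial.degree_sum_le _ _) ?_
    rw [Finset.sup_lt_iff (by exact_mod_cast WithBot.bot_lt_coe (w A))]
    intro b hb
    have hbmem := Finset.mem_of_mem_erase hb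
    have hbne : b ≠ A := Finset.ne_of_mem_erase hb
    have h1 : (Polynomial.C (C (coeff b f)) * g b).degree ≤ (w b : WithBot ℕ) := by
      refine le_trans (Polynomial.degree_mul_le _ _) ?_
      rw [hgdeg]
      calc Polynomial.degree (Polynomial.C (C (coeff b f))) + (w b : WithBot ℕ)
          ≤ 0 + (w b : WithBot ℕ) := by
            gcongr
            exact Polynomial.degree_C_le
        _ = (w b : WithBot ℕ) := zero_add _
    have h2 : w b < w A := lt_of_le_of_ne (hmax b hbmem) (fun h => hbne (hwinj b hbmem A hA h))
    exact lt_of_le_of_lt h1 (by exact_mod_cast h2)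
  have hdecomp : MvPolynomial.finSuccEquiv K d (σ f) =
      Polynomial.C (C (coeff A f)) * g A +
        ∑ a ∈ f.support.erase A, Polynomial.C (C (coeff a f)) * g a := by
    rw [hsum, ← Finset.add_sum_erase _ _ hA]
  have hlead : (MvPolynomial.finSuccEquiv K d (σ f)).leadingCoeff = C (coeff A f) := by
    rw [hdecomp, add_comm, Polynomial.leadingCoeff_add_of_degree_lt (by rw [hmaindeg]; exact hrest)]
    rw [Polynomial.leadingCoeff_mul, Polynomial.leadingCoeff_C, (hgm A).leadingCoeff, mul_one]
  have hfin : MvPolynomial.finSuccEquiv K d (σ (C (coeff A f)⁻¹ * f)) =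
      Polynomial.C (C (coeff A f)⁻¹) * MvPolynomial.finSuccEquiv K d (σ f) := by
    rw [map_mul, map_mul, hCimg]
  rw [Polynomial.Monic, hfin, Polynomial.leadingCoeff_mul, Polynomial.leadingCoeff_C, hlead,
    ← map_mul, inv_mul_cancel₀ hcA, map_one]

end MonicTrick


section ChainBound

lemma mv_ltseries_length_le (K : Type*) [Field K] :
    ∀ (d : ℕ) (p : LTSeries (PrimeSpectrum (MvPolynomial (Fin d) K))), p.length ≤ d := by
  intro d
  induction d with
  | zero =>
    intro p
    by_contra hlen
    have h1 : (0 : ℕ) < p.length := by omega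
    have hbot : ∀ P : PrimeSpectrum (MvPolynomial (Fin 0) K), P.asIdeal = ⊥ := by
      intro P
      by_contra hP
      obtain ⟨x, hxP, hx0⟩ := Submodule.exists_mem_ne_zero_of_ne_bot hP
      obtain ⟨a, rfl⟩ := MvPolynomial.C_surjective (Fin 0) x
      have ha : a ≠ 0 := fun h => hx0 (by rw [h, map_zero])
      have : IsUnit (C a : MvPolynomial (Fin 0) K) := (Ne.isUnit ha).map MvPolynomial.C
      exact P.isPrime.ne_top (Ideal.eq_top_of_isUnit_mem _ hxP this)
    have hlt : p.toFun ⟨0, by omega⟩ < p.toFun ⟨1, by omega⟩ :=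
      p.strictMono (by simp [Fin.lt_def])
    rw [← PrimeSpectrum.asIdeal_lt_asIdeal] at hlt
    rw [hbot, hbot] at hlt
    exact lt_irrefl _ hlt
  | succ d ih =>
    intro p
    rcases Nat.eq_zero_or_pos p.length with h0 | h0
    · omega
    set m := p.length with hm
    have hlt01 : (p.toFun ⟨0, by omega⟩).asIdeal < (p.toFun ⟨1, by omega⟩).asIdeal := by
      rw [PrimeSpectrum.asIdeal_lt_asIdeal]
      exact p.strictMono (by simp [Fin.lt_def])
    obtain ⟨f0, hf0J, hf0I⟩ := SetLike.exists_of_lt hlt01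
    have hf0 : f0 ≠ 0 := fun h => hf0I (by rw [h]; exact Ideal.zero_mem _)
    obtain ⟨σ, c, hc, hmonic⟩ := exists_shear_monic f0 hf0
    set R := MvPolynomial (Fin d) K with hR
    set E : MvPolynomial (Fin (d + 1)) K ≃+* Polynomial R :=
      (σ.trans (MvPolynomial.finSuccEquiv K d)).toRingEquiv with hE
    set g : Polynomial R := MvPolynomial.finSuccEquiv K d (σ (C c * f0)) with hg
    have hgE : g = E (C c * f0) := rfl
    -- the chain in Polynomial R
    set Q : Fin (m + 1) → Ideal (Polynomial R) :=
      fun i => Ideal.map (E : MvPolynomial (Fin (d + 1)) K →+* Polynomial R)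
        (p.toFun i).asIdeal with hQ
    have hQprime : ∀ i, (Q i).IsPrime := fun i => Ideal.map_isPrime_of_equiv E
    have hQmono : ∀ {i j}, i < j → Q i < Q j := by
      intro i j hij
      have hlt : (p.toFun i).asIdeal < (p.toFun j).asIdeal := by
        rw [PrimeSpectrum.asIdeal_lt_asIdeal]; exact p.strictMono hij
      constructor
      · exact Ideal.map_mono hlt.le
      · intro hle
        have h2 : Ideal.map (E.symm : Polynomial R →+* MvPolynomial (Fin (d+1)) K) (Q j) ≤
            Ideal.map (E.symm : Polynomial R →+* MvPolynomial (Fin (d+1)) K) (Q i) :=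
          Ideal.map_mono hle
        simp only [hQ, Ideal.map_of_equiv] at h2
        exact hlt.2 h2
    have hgQ : ∀ (i : Fin (m + 1)), (1 : ℕ) ≤ (i : ℕ) → g ∈ Q i := by
      intro i hi
      have h1 : C c * f0 ∈ (p.toFun i).asIdeal := by
        have hle : (p.toFun ⟨1, by omega⟩).asIdeal ≤ (p.toFun i).asIdeal := by
          rw [PrimeSpectrum.asIdeal_le_asIdeal]
          exact p.monotone (by simp [Fin.le_def]; omega)
        exact hle (Ideal.mul_mem_left _ _ hf0J)
      rw [hgE]
      exact Ideal.mem_map_of_mem _ h1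
    -- quotient to AdjoinRoot g
    have hker : RingHom.ker (AdjoinRoot.mk g) = Ideal.span {g} := Ideal.mk_ker
    set B := AdjoinRoot g with hB
    haveI : Module.Finite R B := Module.Finite.of_basis (AdjoinRoot.powerBasis' hmonic).basis
    set Qb : Fin (m + 1) → Ideal B := fun i => Ideal.map (AdjoinRoot.mk g) (Q i) with hQb
    have hkerle : ∀ (i : Fin (m + 1)), (1 : ℕ) ≤ (i : ℕ) →
        RingHom.ker (AdjoinRoot.mk g) ≤ Q i := by
      intro i hi
      rw [hker, Ideal.span_le, Set.singleton_subset_iff]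
      exact hgQ i hi
    have hQbprime : ∀ (i : Fin (m + 1)), (1 : ℕ) ≤ (i : ℕ) → (Qb i).IsPrime := by
      intro i hi
      haveI := hQprime i
      exact Ideal.map_isPrime_of_surjective AdjoinRoot.mk_surjective (hkerle i hi)
    have hQbmono : ∀ (i j : Fin (m + 1)), (1 : ℕ) ≤ (i : ℕ) → i < j → Qb i < Qb j := by
      intro i j hi hij
      constructor
      · exact Ideal.map_mono (hQmono hij).le
      · intro hle
        have h1 : Q j ≤ Q i := by
          have h2 := Ideal.comap_mono (f := (AdjoinRoot.mk g)) hle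
          rw [Ideal.comap_map_of_surjective _ AdjoinRoot.mk_surjective,
            Ideal.comap_map_of_surjective _ AdjoinRoot.mk_surjective] at h2
          have h3 : RingHom.ker (AdjoinRoot.mk g) = Ideal.comap (AdjoinRoot.mk g) ⊥ :=
            RingHom.ker_eq_comap_bot _
          rwa [← h3, sup_eq_left.mpr (hkerle i hi), sup_eq_left.mpr (hkerle j (by omega))] at h2
        exact (hQmono hij).2 h1
    -- comap down to R
    set qq : Fin (m + 1) → Ideal R := fun i => Ideal.comap (algebraMap R B) (Qb i) with hqq
    have hqqprime : ∀ (i : Fin (m + 1)), (1 : ℕ) ≤ (i : ℕ) → (qq i).IsPrime := by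
      intro i hi
      haveI := hQbprime i hi
      exact Ideal.IsPrime.comap _
    have hqqmono : ∀ (i j : Fin (m + 1)), (1 : ℕ) ≤ (i : ℕ) → i < j → qq i < qq j := by
      intro i j hi hij
      haveI := hQbprime i hi
      obtain ⟨x, hxj, hxi⟩ := SetLike.exists_of_lt (hQbmono i j hi hij)
      exact Ideal.comap_lt_comap_of_integral_mem_sdiff (hQbmono i j hi hij).le ⟨hxj, hxi⟩
        (Algebra.IsIntegral.isIntegral x)
    -- build the new series
    set F : Fin ((m - 1) + 1) → PrimeSpectrum R := fun i =>
      ⟨qq ⟨(i : ℕ) + 1, by omega⟩, hqqprime _ (by simp)⟩ with hF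
    have hFmono : StrictMono F := by
      rw [Fin.strictMono_iff_lt_succ]
      intro i
      rw [← PrimeSpectrum.asIdeal_lt_asIdeal]
      exact hqqmono _ _ (by simp) (by simp [Fin.lt_def])
    have hle2 := ih (LTSeries.mk (m - 1) F hFmono)
    have hle3 : m - 1 ≤ d := hle2
    show m ≤ d + 1
    omega

end ChainBound


section Chains
variable (A : Type*) [CommRing A] [IsDomain A] (k d n : ℕ)

lemma monomial_prod_pow {k : ℕ} (u : Fin k → (Fin k →₀ ℕ)) (b : Fin k → ℕ) :
    (∏ i : Fin k, (monomial (u i) (1 : A)) ^ (b i)) =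
      monomial (∑ i : Fin k, b i • u i) (1 : A) := by
  classical
  have H : ∀ s : Finset (Fin k), (∏ i ∈ s, (monomial (u i) (1 : A)) ^ (b i)) =
      monomial (∑ i ∈ s, b i • u i) (1 : A) := by
    intro s
    induction s using Finset.induction with
    | empty => simp
    | insert _ _ hx ih =>
      rw [Finset.prod_insert hx, Finset.sum_insert hx, ih, monomial_pow, one_pow,
        monomial_mul, one_mul]
  exact H Finset.univ

lemma lower_chain (hk : 0 < k) (hn : 0 < n)
    (e : Fin d → (Fin k →₀ ℕ)) (he : Function.Injective e)
    (hrange : Set.range e = {s : Fin k →₀ ℕ | (s.sum fun _ m => m) = n}) :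
    ∃ q : LTSeries (PrimeSpectrum (MvPolynomial (Fin d) A)),
      q.length = d - k ∧ q.last.asIdeal =
        RingHom.ker ((aeval fun i => monomial (e i) (1 : A) :
          MvPolynomial (Fin d) A →ₐ[A] MvPolynomial (Fin k) A) :
            MvPolynomial (Fin d) A →+* MvPolynomial (Fin k) A) := by
  classical
  set φ' : MvPolynomial (Fin d) A →ₐ[A] MvPolynomial (Fin k) A :=
    aeval fun i => monomial (e i) (1 : A) with hφ'
  -- choose indices for pure powers
  have hmem : ∀ i : Fin k, ∃ v : Fin d, e v = Finsupp.single i n := by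
    intro i
    have : Finsupp.single i n ∈ Set.range e := by
      rw [hrange]
      simp [Finsupp.sum_single_index]
    exact this
  choose c hc using hmem
  have hcinj : Function.Injective c := by
    intro i j hij
    have h2 : Finsupp.single i n = Finsupp.single j n := by rw [← hc i, ← hc j, hij]
    by_contra hne
    have := (Finsupp.single_eq_single_iff _ _ _ _).mp h2
    rcases this with ⟨h, _⟩ | ⟨h1, h2⟩
    · exact hne h
    · exact hn.ne' h1
  set Sc : Finset (Fin d) := (Finset.image c Finset.univ)ᶜ with hSc
  have hcard : Sc.card = d - k := by
    rw [hSc, Finset.card_compl, Finset.card_image_of_injective _ hcinj, Finset.card_univ]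
    simp [Fintype.card_fin]
  set mfun : Fin (d - k) → Fin d := fun j => (Sc.orderIsoOfFin hcard j : Fin d) with hmfun
  have hminj : Function.Injective mfun := by
    intro i j hij
    exact (Sc.orderIsoOfFin hcard).injective (Subtype.coe_injective hij)
  have hmSc : ∀ j, mfun j ∈ Sc := fun j => (Sc.orderIsoOfFin hcard j).2
  have hmnotc : ∀ j, mfun j ∉ Finset.image c Finset.univ := by
    intro j
    have := hmSc j
    rw [hSc, Finset.mem_compl] at this
    exact this
  have hcover : ∀ v : Fin d, v ∈ Finset.image c Finset.univ ∨ ∃ j, mfun j = v := by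
    intro v
    by_cases hv : v ∈ Finset.image c Finset.univ
    · exact Or.inl hv
    · right
      have hvSc : v ∈ Sc := by rw [hSc, Finset.mem_compl]; exact hv
      exact ⟨(Sc.orderIsoOfFin hcard).symm ⟨v, hvSc⟩, by
        rw [hmfun]
        simp⟩
  -- the maps
  set ψ : Finset (Fin d) → (MvPolynomial (Fin d) A →ₐ[A] MvPolynomial (Fin k ⊕ Fin d) A) :=
    fun s => aeval fun v =>
      if v ∈ s then rename Sum.inl (monomial (e v) (1 : A)) else X (Sum.inr v) with hψ
  set J : Finset (Fin d) → Ideal (MvPolynomial (Fin d) A) := fun s =>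
    RingHom.ker ((ψ s) : MvPolynomial (Fin d) A →+* MvPolynomial (Fin k ⊕ Fin d) A) with hJ
  have hJprime : ∀ s, (J s).IsPrime := fun s => RingHom.ker_isPrime _
  have hJmono : ∀ {s s' : Finset (Fin d)}, s ⊆ s' → J s ≤ J s' := by
    intro s s' hss
    set θ : MvPolynomial (Fin k ⊕ Fin d) A →ₐ[A] MvPolynomial (Fin k ⊕ Fin d) A :=
      aeval (Sum.elim (fun x => X (Sum.inl x))
        (fun v => if v ∈ s' then rename Sum.inl (monomial (e v) (1 : A)) else X (Sum.inr v)))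
      with hθ
    have hθinl : ∀ (qq : MvPolynomial (Fin k) A), θ (rename Sum.inl qq) = rename Sum.inl qq := by
      intro qq
      have : θ.comp (rename Sum.inl) = (rename Sum.inl : MvPolynomial (Fin k) A →ₐ[A] _) := by
        apply MvPolynomial.algHom_ext
        intro x
        simp [hθ, rename_X]
      exact congrArg (fun (F : MvPolynomial (Fin k) A →ₐ[A] _) => F qq) this
    have hcomp : θ.comp (ψ s) = ψ s' := by
      apply MvPolynomial.algHom_ext
      intro v
      rw [AlgHom.comp_apply]
      simp only [hψ, aeval_X]
      by_cases hv : v ∈ s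
      · rw [if_pos hv, if_pos (hss hv), hθinl]
      · rw [if_neg hv]
        simp [hθ]
    intro f hf
    have h0 : (ψ s) f = 0 := hf
    have h1 : ψ s' f = θ (ψ s f) := by rw [← hcomp]; rfl
    show ψ s' f = 0
    rw [h1, h0, map_zero]
  have hJtop : J Finset.univ = RingHom.ker (φ' :
      MvPolynomial (Fin d) A →+* MvPolynomial (Fin k) A) := by
    have hcompφ : (rename Sum.inl).comp φ' = ψ Finset.univ := by
      apply MvPolynomial.algHom_ext
      intro v
      simp [hφ', hψ, aeval_X]
    ext f
    have hval : (ψ Finset.univ) f = rename (Sum.inl : Fin k → Fin k ⊕ Fin d) (φ' f) := by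
      have h3 : ((rename Sum.inl).comp φ') f = (ψ Finset.univ) f := by rw [hcompφ]
      simpa using h3.symm
    constructor
    · intro hf
      have h1 : (ψ Finset.univ) f = 0 := hf
      have h2 : rename (Sum.inl : Fin k → Fin k ⊕ Fin d) (φ' f) = 0 := by rw [← hval]; exact h1
      have h4 : φ' f = 0 :=
        MvPolynomial.rename_injective (R := A) Sum.inl Sum.inl_injective (by simpa using h2)
      exact h4
    · intro hf
      have h1 : φ' f = 0 := hf
      show (ψ Finset.univ) f = 0
      rw [hval, h1, map_zero]
  -- the increasing family of finsets
  set sfun : ℕ → Finset (Fin d) := fun j =>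
    Finset.image c Finset.univ ∪
      Finset.image mfun (Finset.univ.filter fun t : Fin (d - k) => (t : ℕ) < j) with hsfun
  have hsmono : ∀ {j j' : ℕ}, j ≤ j' → sfun j ⊆ sfun j' := by
    intro j j' hjj
    apply Finset.union_subset_union le_rfl
    apply Finset.image_subset_image
    intro t ht
    simp only [Finset.mem_filter] at ht ⊢
    exact ⟨ht.1, lt_of_lt_of_le ht.2 hjj⟩
  have hstop : sfun (d - k) = Finset.univ := by
    ext v
    simp only [Finset.mem_univ, iff_true, hsfun, Finset.mem_union]
    rcases hcover v with hv | ⟨j, hj⟩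
    · exact Or.inl hv
    · right
      rw [Finset.mem_image]
      exact ⟨j, by simp [j.2], hj⟩
  -- strictness
  have hstrict : ∀ j : ℕ, j < d - k → J (sfun j) < J (sfun (j + 1)) := by
    intro j hj
    set jj : Fin (d - k) := ⟨j, hj⟩ with hjj
    set a : Fin k →₀ ℕ := e (mfun jj) with ha
    set β : MvPolynomial (Fin d) A :=
      (X (mfun jj)) ^ n - ∏ i : Fin k, (X (c i)) ^ (a i) with hβ
    have hmem_mj : mfun jj ∈ sfun (j + 1) := by
      rw [hsfun]
      apply Finset.mem_union_right
      rw [Finset.mem_image]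
      exact ⟨jj, by simp [hjj], rfl⟩
    have hnotmem_mj : mfun jj ∉ sfun j := by
      rw [hsfun, Finset.mem_union]
      rintro (h1 | h2)
      · exact hmnotc jj h1
      · rw [Finset.mem_image] at h2
        obtain ⟨t, ht, htt⟩ := h2
        have := hminj htt
        rw [Finset.mem_filter] at ht
        subst this
        rw [hjj] at ht
        simp at ht
    have hcmem : ∀ (i : Fin k) (j' : ℕ), c i ∈ sfun j' := by
      intro i j'
      rw [hsfun]
      apply Finset.mem_union_left
      exact Finset.mem_image_of_mem _ (Finset.mem_univ i)
    -- the Finsupp identity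
    have hfs : (n • a : Fin k →₀ ℕ) = ∑ i : Fin k, a i • Finsupp.single i n := by
      ext t
      rw [Finsupp.smul_apply, Finsupp.finset_sum_apply]
      simp only [Finsupp.smul_apply, Finsupp.single_apply, smul_eq_mul]
      rw [Finset.sum_eq_single t]
      · simp [mul_comm]
      · intro b _ hb
        simp [hb]
      · intro h
        exact absurd (Finset.mem_univ t) h
    have himg : ∀ (j' : ℕ), mfun jj ∈ sfun j' → ψ (sfun j') β = 0 := by
      intro j' hmm
      rw [hβ, map_sub, map_pow, map_prod]
      simp only [hψ, map_pow, aeval_X]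
      rw [if_pos hmm]
      have hprod : ∀ i : Fin k,
          ((if c i ∈ sfun j' then rename Sum.inl (monomial (e (c i)) (1:A))
            else X (Sum.inr (c i))) ^ (a i)) =
          rename Sum.inl ((monomial (Finsupp.single i n) (1:A)) ^ (a i)) := by
        intro i
        rw [if_pos (hcmem i j'), hc i, map_pow]
      rw [Finset.prod_congr rfl (fun i _ => hprod i), ← map_prod, ← map_pow]
      rw [monomial_prod_pow]
      have h1 : (monomial a (1:A)) ^ n = monomial (n • a) (1:A) := by
        rw [monomial_pow, one_pow]
      rw [h1, hfs, sub_eq_zero]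
    have hβmem : β ∈ J (sfun (j + 1)) := by
      have h0 : (ψ (sfun (j+1))) β = 0 := himg (j + 1) hmem_mj
      exact h0
    have hβnot : β ∉ J (sfun j) := by
      intro hcontra0
      have hcontra : (ψ (sfun j)) β = 0 := hcontra0
      have hval : ψ (sfun j) β =
          (X (Sum.inr (mfun jj))) ^ n -
            rename Sum.inl (monomial (n • a) (1 : A)) := by
        rw [hβ, map_sub, map_pow, map_prod]
        simp only [hψ, map_pow, aeval_X]
        rw [if_neg hnotmem_mj]
        congr 1
        have hprod : ∀ i : Fin k,
            ((if c i ∈ sfun j then rename Sum.inl (monomial (e (c i)) (1:A))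
              else X (Sum.inr (c i))) ^ (a i)) =
            rename Sum.inl ((monomial (Finsupp.single i n) (1:A)) ^ (a i)) := by
          intro i
          rw [if_pos (hcmem i j), hc i, map_pow]
        rw [Finset.prod_congr rfl (fun i _ => hprod i), ← map_prod, monomial_prod_pow, ← hfs]
      rw [hval] at hcontra
      have hzero := congrArg (coeff (Finsupp.single (Sum.inr (mfun jj)) n)) hcontra
      rw [coeff_sub, X_pow_eq_monomial, rename_monomial, coeff_monomial, coeff_monomial,
        coeff_zero] at hzero
      rw [if_pos rfl] at hzero
      have hne : Finsupp.mapDomain (Sum.inl : Fin k → Fin k ⊕ Fin d) (n • a) ≠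
          Finsupp.single (Sum.inr (mfun jj)) n := by
        intro heq
        have := congrArg (fun F => F (Sum.inr (mfun jj))) heq
        simp only [Finsupp.single_apply, if_pos rfl] at this
        rw [Finsupp.mapDomain_notin_range] at this
        · exact hn.ne this
        · rintro ⟨x, hx⟩
          exact Sum.inl_ne_inr hx
      rw [if_neg hne] at hzero
      simp at hzero
    refine lt_of_le_of_ne (hJmono (hsmono (Nat.le_succ j))) ?_
    intro heq
    rw [← heq] at hβmem
    exact hβnot hβmem
  -- assemble the series
  set F : Fin ((d - k) + 1) → PrimeSpectrum (MvPolynomial (Fin d) A) :=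
    fun i => ⟨J (sfun (i : ℕ)), hJprime _⟩ with hF
  have hFmono : StrictMono F := by
    rw [Fin.strictMono_iff_lt_succ]
    intro i
    rw [← PrimeSpectrum.asIdeal_lt_asIdeal]
    simp only [hF, Fin.coe_castSucc, Fin.val_succ]
    exact hstrict (i : ℕ) i.2
  refine ⟨LTSeries.mk (d - k) F hFmono, rfl, ?_⟩
  show (F (Fin.last _)).asIdeal = _
  simp only [hF, Fin.val_last]
  rw [hstop, hJtop]

end Chains


section Chains
variable (A : Type*) [CommRing A] [IsDomain A] (k d n : ℕ)

lemma upper_chain (hk : 0 < k) (hn : 0 < n)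
    (e : Fin d → (Fin k →₀ ℕ)) (he : Function.Injective e)
    (hrange : Set.range e = {s : Fin k →₀ ℕ | (s.sum fun _ m => m) = n}) :
    ∃ r : LTSeries (PrimeSpectrum (MvPolynomial (Fin d) A)),
      r.length = k ∧
      r.head.asIdeal = RingHom.ker ((aeval fun i => monomial (e i) (1 : A) :
        MvPolynomial (Fin d) A →ₐ[A] MvPolynomial (Fin k) A) :
          MvPolynomial (Fin d) A →+* MvPolynomial (Fin k) A) ∧
      ∀ (i : Fin (r.length + 1)) (a : A), a ≠ 0 → C a ∉ (r.toFun i).asIdeal := by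
  classical
  set φ' : MvPolynomial (Fin d) A →ₐ[A] MvPolynomial (Fin k) A :=
    aeval fun i => monomial (e i) (1 : A) with hφ'
  have hmem : ∀ i : Fin k, ∃ v : Fin d, e v = Finsupp.single i n := by
    intro i
    have : Finsupp.single i n ∈ Set.range e := by
      rw [hrange]
      simp [Finsupp.sum_single_index]
    exact this
  choose c hc using hmem
  set ev : ℕ → (MvPolynomial (Fin k) A →ₐ[A] MvPolynomial (Fin k) A) :=
    fun j => aeval fun x : Fin k => if j ≤ (x : ℕ) then X x else 0 with hev
  set χ : ℕ → (MvPolynomial (Fin d) A →ₐ[A] MvPolynomial (Fin k) A) :=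
    fun j => (ev j).comp φ' with hχ
  set KU : ℕ → Ideal (MvPolynomial (Fin d) A) := fun j =>
    RingHom.ker ((χ j) : MvPolynomial (Fin d) A →+* MvPolynomial (Fin k) A) with hKU
  have hKUprime : ∀ j, (KU j).IsPrime := fun j => RingHom.ker_isPrime _
  have hcompev : ∀ {j j' : ℕ}, j ≤ j' → (ev j').comp (ev j) = ev j' := by
    intro j j' hjj
    apply MvPolynomial.algHom_ext
    intro x
    rw [AlgHom.comp_apply]
    simp only [hev, aeval_X]
    by_cases hx : j ≤ (x : ℕ)
    · rw [if_pos hx]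
      simp only [aeval_X]
    · rw [if_neg hx, map_zero, if_neg (by omega)]
  have hKUmono : ∀ {j j' : ℕ}, j ≤ j' → KU j ≤ KU j' := by
    intro j j' hjj f hf
    have h0 : ((ev j).comp φ') f = 0 := hf
    show ((ev j').comp φ') f = 0
    have h1 : ((ev j').comp φ') f = (ev j') (((ev j).comp φ') f) := by
      rw [show (ev j') (((ev j).comp φ') f) = ((ev j').comp ((ev j).comp φ')) f from rfl,
        ← AlgHom.comp_assoc, hcompev hjj]
    rw [h1, h0, map_zero]
  have hKU0 : KU 0 = RingHom.ker (φ' :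
      MvPolynomial (Fin d) A →+* MvPolynomial (Fin k) A) := by
    have hev0 : ev 0 = AlgHom.id A _ := by
      apply MvPolynomial.algHom_ext
      intro x
      simp [hev, aeval_X]
    have hχ0 : χ 0 = φ' := by
      show (ev 0).comp φ' = φ'
      rw [hev0]
      exact AlgHom.id_comp φ'
    show RingHom.ker _ = _
    rw [hχ0]
  have hstrict : ∀ j : ℕ, j < k → KU j < KU (j + 1) := by
    intro j hj
    set jj : Fin k := ⟨j, hj⟩ with hjj
    have hφX : φ' (X (c jj)) = (X jj : MvPolynomial (Fin k) A) ^ n := by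
      rw [hφ', aeval_X, hc jj, ← X_pow_eq_monomial]
    have hwit_in : X (c jj) ∈ KU (j + 1) := by
      show (χ (j + 1)) (X (c jj)) = 0
      show (ev (j + 1)) (φ' (X (c jj))) = 0
      rw [hφX, map_pow]
      simp only [hev, aeval_X]
      rw [if_neg (by simp [hjj]), zero_pow hn.ne']
    have hwit_out : X (c jj) ∉ KU j := by
      intro hcon
      have h0 : (ev j) (φ' (X (c jj))) = 0 := hcon
      rw [hφX, map_pow] at h0
      simp only [hev, aeval_X] at h0
      rw [if_pos (by simp [hjj])] at h0
      exact pow_ne_zero n (MvPolynomial.X_ne_zero jj) h0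
    refine lt_of_le_of_ne (hKUmono (Nat.le_succ j)) ?_
    intro heq
    rw [← heq] at hwit_in
    exact hwit_out hwit_in
  set F : Fin (k + 1) → PrimeSpectrum (MvPolynomial (Fin d) A) :=
    fun i => ⟨KU (i : ℕ), hKUprime _⟩ with hF
  have hFmono : StrictMono F := by
    rw [Fin.strictMono_iff_lt_succ]
    intro i
    rw [← PrimeSpectrum.asIdeal_lt_asIdeal]
    simp only [hF, Fin.coe_castSucc, Fin.val_succ]
    exact hstrict (i : ℕ) i.2
  refine ⟨LTSeries.mk k F hFmono, rfl, ?_, ?_⟩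
  · show (F 0).asIdeal = _
    simp only [hF]
    rw [show ((0 : Fin (k + 1)) : ℕ) = 0 from rfl, hKU0]
  · intro i a hane hmemC
    have h0 : (χ ((i : ℕ))) (C a) = 0 := hmemC
    have h1 : (χ ((i : ℕ))) (C a) = C a := by
      have h2 := (χ ((i : ℕ))).commutes a
      simpa [MvPolynomial.algebraMap_eq] using h2
    rw [h1] at h0
    exact hane (by
      have : (C a : MvPolynomial (Fin k) A) = C 0 := by rw [h0, map_zero]
      exact MvPolynomial.C_injective _ _ this)

end Chains


attribute [local instance] MvPolynomial.algebraMvPolynomial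


/-- The height of an ideal `I` in a commutative ring: the infimum of the heights (in the
prime spectrum) of the prime ideals containing `I`. -/
noncomputable def idealHeight {R : Type*} [CommRing R] (I : Ideal R) : ℕ∞ :=
  ⨅ (p : PrimeSpectrum R) (_ : I ≤ p.asIdeal), Order.height p

/-- Let `A` be a domain and `φ : A[t₁,…,t_d] → A[x₁,…,x_k]` the `A`-algebra map sending the
`tᵢ` bijectively onto the distinct monomials of degree `n` (so `d = C(n+k-1, k-1)`), whose image
is the `n`-th Veronese subring.  Then `I = ker φ` is a prime ideal and `height I = d - k`. -/
theorem veronese_defining_ideal_prime_and_height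
    (A : Type*) [CommRing A] [IsDomain A] (k d n : ℕ) (hk : 0 < k) (hn : 0 < n)
    (hd : d = Nat.choose (n + k - 1) (k - 1))
    (e : Fin d → (Fin k →₀ ℕ)) (he : Function.Injective e)
    (hrange : Set.range e = {s : Fin k →₀ ℕ | (s.sum fun _ m => m) = n}) :
    let φ : MvPolynomial (Fin d) A →ₐ[A] MvPolynomial (Fin k) A :=
      aeval fun i => monomial (e i) 1
    let I : Ideal (MvPolynomial (Fin d) A) :=
      RingHom.ker (φ : MvPolynomial (Fin d) A →+* MvPolynomial (Fin k) A)
    I.IsPrime ∧ idealHeight I = (d - k : ℕ) := by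
  intro φ I
  have hIp : I.IsPrime := RingHom.ker_isPrime _
  refine ⟨hIp, ?_⟩
  classical
  set pI : PrimeSpectrum (MvPolynomial (Fin d) A) := ⟨I, hIp⟩ with hpI
  have hheight : idealHeight I = Order.height pI := by
    apply le_antisymm
    · exact iInf₂_le pI le_rfl
    · exact le_iInf₂ fun p hp => Order.height_mono ((PrimeSpectrum.asIdeal_le_asIdeal _ _).mp hp)
  rw [hheight]
  obtain ⟨q, hqlen, hqlast⟩ := lower_chain A k d n hk hn e he hrange
  obtain ⟨r, hrlen, hrhead, hrdisj⟩ := upper_chain A k d n hk hn e he hrange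
  have hqlastP : q.last = pI := PrimeSpectrum.ext hqlast
  have hrheadP : r.head = pI := PrimeSpectrum.ext hrhead
  have hdisjI : ∀ (a : A), a ≠ 0 → C a ∉ I := by
    intro a ha hmem
    have h0 : φ (C a) = 0 := hmem
    have h1 : φ (C a) = C a := by
      simpa [MvPolynomial.algebraMap_eq] using φ.commutes a
    rw [h1] at h0
    exact ha (MvPolynomial.C_injective _ _ (by rw [h0, map_zero]))
  apply le_antisymm
  · -- upper bound
    apply Order.height_le
    intro s hslast
    have hconn : s.last = r.head := by rw [hslast, hrheadP]
    set t := s.smash r hconn with ht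
    have htmem : ∀ i : Fin (t.length + 1),
        (∃ i', t.toFun i = s.toFun i') ∨ (∃ i', t.toFun i = r.toFun i') := by
      intro i
      by_cases hi : (i : ℕ) < s.length
      · left
        refine ⟨⟨(i : ℕ), by omega⟩, ?_⟩
        obtain ⟨j, rfl⟩ : ∃ j : Fin s.length,
            (Fin.castAdd (r.length + 1) j : Fin (s.length + (r.length + 1))) = i := ⟨⟨i, hi⟩, rfl⟩
        show Fin.addCases (m := s.length) (n := r.length + 1)
          (motive := fun _ => PrimeSpectrum (MvPolynomial (Fin d) A)) (s.toFun ∘ Fin.castSucc) r.toFun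
          (Fin.castAdd (r.length + 1) j) = _
        rw [Fin.addCases_left]
        rfl
      · right
        refine ⟨⟨(i : ℕ) - s.length, by
          have h3 := i.2
          have h4 : t.length = s.length + r.length := rfl
          omega⟩, ?_⟩
        have h4 : t.length = s.length + r.length := rfl
        obtain ⟨j, rfl⟩ : ∃ j : Fin (r.length + 1),
            (Fin.natAdd s.length j : Fin (s.length + (r.length + 1))) = i :=
          ⟨⟨(i : ℕ) - s.length, by have h3 := i.2; omega⟩, Fin.ext (by simp; omega)⟩
        show Fin.addCases (m := s.length) (n := r.length + 1)
          (motive := fun _ => PrimeSpectrum (MvPolynomial (Fin d) A)) (s.toFun ∘ Fin.castSucc) r.toFun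
          (Fin.natAdd s.length j) = _
        rw [Fin.addCases_right]
        congr 1
        ext
        simp
    have hsle : ∀ i', (s.toFun i').asIdeal ≤ I := by
      intro i'
      have h1 : s.toFun i' ≤ s.last := s.monotone (Fin.le_last i')
      rw [hslast] at h1
      exact (PrimeSpectrum.asIdeal_le_asIdeal _ _).mpr h1
    set K := FractionRing A with hK
    set M : Submonoid (MvPolynomial (Fin d) A) :=
      (nonZeroDivisors A).map (C : A →+* MvPolynomial (Fin d) A) with hM
    have hdisj : ∀ i : Fin (t.length + 1),
        Disjoint (M : Set (MvPolynomial (Fin d) A)) ((t.toFun i).asIdeal : Set _) := by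
      intro i
      rw [Set.disjoint_left]
      rintro x ⟨a, haA, rfl⟩ hxP
      have ha0 : a ≠ 0 := mem_nonZeroDivisors_iff_ne_zero.mp haA
      rcases htmem i with ⟨i', hi'⟩ | ⟨i', hi'⟩
      · rw [hi'] at hxP
        exact hdisjI a ha0 (hsle i' hxP)
      · rw [hi'] at hxP
        exact hrdisj i' a ha0 hxP
    set OI := IsLocalization.orderIsoOfPrime M (MvPolynomial (Fin d) K) with hOI
    have hpe : ∀ i : Fin (t.length + 1), ((t.toFun i).asIdeal).IsPrime ∧
        Disjoint (M : Set (MvPolynomial (Fin d) A)) ((t.toFun i).asIdeal : Set _) :=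
      fun i => ⟨(t.toFun i).isPrime, hdisj i⟩
    set pe : Fin (t.length + 1) → {p : Ideal (MvPolynomial (Fin d) A) //
        p.IsPrime ∧ Disjoint (M : Set (MvPolynomial (Fin d) A)) (p : Set _)} :=
      fun i => ⟨(t.toFun i).asIdeal, hpe i⟩ with hpedef
    set G : Fin (t.length + 1) → PrimeSpectrum (MvPolynomial (Fin d) K) := fun i =>
      ⟨(OI.symm (pe i)).1, (OI.symm (pe i)).2⟩ with hG
    have hGmono : StrictMono G := by
      intro i j hij
      have h1 : t.toFun i < t.toFun j := LTSeries.strictMono t hij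
      have h2 : pe i < pe j := by
        rw [hpedef]
        show (⟨(t.toFun i).asIdeal, hpe i⟩ :
          {p : Ideal (MvPolynomial (Fin d) A) //
            p.IsPrime ∧ Disjoint (M : Set (MvPolynomial (Fin d) A)) (p : Set _)}) < _
        rw [Subtype.mk_lt_mk]
        exact (PrimeSpectrum.asIdeal_lt_asIdeal _ _).mpr h1
      have h3 := OI.symm.strictMono h2
      rw [← PrimeSpectrum.asIdeal_lt_asIdeal]
      exact h3
    have hlenle := mv_ltseries_length_le K d (LTSeries.mk t.length G hGmono)
    have htlen : t.length = s.length + r.length := rfl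
    have hlen2 : s.length + k ≤ d := by
      have : (LTSeries.mk t.length G hGmono).length = t.length := rfl
      rw [this] at hlenle
      omega
    have hdk : s.length ≤ d - k := by omega
    exact_mod_cast hdk
  · -- lower bound
    have hlast := Order.length_le_height_last (p := q)
    rw [hqlastP, hqlen] at hlast
    exact_mod_cast hlast
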